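/- arXiv:1512.02692 — 6 statements merged into one kernel-verified Lean document; each statement's English description precedes it below -/
import Mathlib

section
/- Let N ≥ 1 and ν ≥ N. For the maximally entangled resource state with entries ρ_{k,j} = 1/(ν+1) for all 0 ≤ k,j ≤ ν, the teleportation fidelity f = 2/(N+2) + Σ_{k≠j} max{0, N+1-|k-j|}/((N+1)(N+2)(ν+1)) equals 1 - N/(3(ν+1)). -/
open Finset

-- triangular sum: for a ≤ m+1, 2 * Σ_{d<m+1} (a ∸ d) = a(a+1)
lemma tri (a m : ℕ) (h : a ≤ m + 1) :
    2 * ∑ d ∈ range (m+1), (a - d) = a * (a + 1) := by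
  have h1 : ∑ d ∈ range (m+1), (a - d) = ∑ d ∈ range a, (a - d) := by
    rw [← Finset.sum_subset (Finset.range_subset_range.2 (by omega : a ≤ m + 1))]
    intro x hx hnx
    simp only [Finset.mem_range] at hx hnx
    omega
  have h2 : ∑ d ∈ range a, (a - d) = ∑ d ∈ range a, (d + 1) := by
    rw [← Finset.sum_range_reflect]
    apply Finset.sum_congr rfl
    intro x hx
    simp only [Finset.mem_range] at hx
    omega
  have h3 : ∑ d ∈ range (a+1), d = ∑ d ∈ range a, (d + 1) := by
    rw [Finset.sum_range_succ']; simp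
  have h4 := Finset.sum_range_id_mul_two (a+1)
  simp only [Nat.add_sub_cancel] at h4
  rw [Nat.mul_comm (a+1) a] at h4
  omega


-- adding one more row and column to the square sum
lemma step (a ν : ℕ) (ha : 1 ≤ a) (h : a ≤ ν + 2) :
    2 * ∑ k ∈ range (ν+2), ∑ j ∈ range (ν+2), (a - (k-j) - (j-k))
    = 2 * (∑ k ∈ range (ν+1), ∑ j ∈ range (ν+1), (a - (k-j) - (j-k)))
      + ((a-1) * a + a * (a+1)) := by
  have hA : 2 * ∑ k ∈ range (ν+1), (a - (k-(ν+1)) - ((ν+1)-k)) = (a-1) * a := by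
    have e1 : ∑ k ∈ range (ν+1), (a - (k-(ν+1)) - ((ν+1)-k))
        = ∑ k ∈ range (ν+1), ((a-1) - (ν + 1 - 1 - k)) := by
      apply Finset.sum_congr rfl; intro k hk; simp only [Finset.mem_range] at hk; omega
    rw [e1, Finset.sum_range_reflect (fun d => (a-1) - d) (ν+1),
      tri (a-1) ν (by omega)]
    have : a - 1 + 1 = a := by omega
    rw [this]
  have hB : 2 * ∑ j ∈ range (ν+2), (a - ((ν+1)-j) - (j-(ν+1))) = a * (a+1) := by
    have e1 : ∑ j ∈ range (ν+2), (a - ((ν+1)-j) - (j-(ν+1)))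
        = ∑ j ∈ range (ν+2), (a - (ν + 2 - 1 - j)) := by
      apply Finset.sum_congr rfl; intro j hj; simp only [Finset.mem_range] at hj; omega
    rw [e1, Finset.sum_range_reflect (fun d => a - d) (ν+2), tri a (ν+1) (by omega)]
  rw [Finset.sum_range_succ]
  have hin : ∑ k ∈ range (ν+1), ∑ j ∈ range (ν+2), (a - (k-j) - (j-k))
      = (∑ k ∈ range (ν+1), ∑ j ∈ range (ν+1), (a - (k-j) - (j-k)))
        + ∑ k ∈ range (ν+1), (a - (k-(ν+1)) - ((ν+1)-k)) := by
    rw [← Finset.sum_add_distrib]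
    exact Finset.sum_congr rfl fun k _ => Finset.sum_range_succ _ _
  rw [hin]
  omega


lemma base_eval (N : ℕ) :
    3 * (∑ k ∈ range (N+1), ∑ j ∈ range (N+1), (N+1 - (k-j) - (j-k)))
      + N * (N+1) * (N+2) = 3 * (N+1)^3 := by
  induction N with
  | zero => simp
  | succ n ih =>
    show 3 * (∑ k ∈ range (n+2), ∑ j ∈ range (n+2), (n+2 - (k-j) - (j-k)))
      + (n+1) * (n+2) * (n+3) = 3 * (n+2)^3
    have hstep := step (n+2) n (by omega) (by omega)
    have hnorm : n + 2 - 1 = n + 1 := rfl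
    rw [hnorm] at hstep
    have hshift : ∑ k ∈ range (n+1), ∑ j ∈ range (n+1), (n+2 - (k-j) - (j-k))
        = (∑ k ∈ range (n+1), ∑ j ∈ range (n+1), (n+1 - (k-j) - (j-k)))
          + (n+1)*(n+1) := by
      have h1 : ∀ k ∈ range (n+1),
          ∑ j ∈ range (n+1), (n+2 - (k-j) - (j-k))
          = (∑ j ∈ range (n+1), (n+1 - (k-j) - (j-k))) + (n+1) := by
        intro k hk
        simp only [Finset.mem_range] at hk
        have e : ∑ j ∈ range (n+1), (n+2 - (k-j) - (j-k))
            = ∑ j ∈ range (n+1), ((n+1 - (k-j) - (j-k)) + 1) := by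
          apply Finset.sum_congr rfl
          intro j hj; simp only [Finset.mem_range] at hj; omega
        rw [e, Finset.sum_add_distrib, Finset.sum_const, Finset.card_range,
          smul_eq_mul, mul_one]
      rw [Finset.sum_congr rfl h1, Finset.sum_add_distrib, Finset.sum_const,
        Finset.card_range, smul_eq_mul]
    rw [hshift] at hstep
    have h2 : 2 * (3 * (∑ k ∈ range (n+2), ∑ j ∈ range (n+2), (n+2 - (k-j) - (j-k)))
        + (n+1) * (n+2) * (n+3)) = 2 * (3 * (n+2)^3) := by
      zify at hstep ih ⊢
      linear_combination 3 * hstep + 2 * ih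
    exact Nat.eq_of_mul_eq_mul_left (by norm_num) h2

lemma sum_nat_eval (N ν : ℕ) (h : N ≤ ν) :
    3 * ∑ k ∈ range (ν+1), ∑ j ∈ range (ν+1), (N + 1 - (k - j) - (j - k))
      + N * (N+1) * (N+2) = 3 * (N+1)^2 * (ν+1) := by
  induction ν, h using Nat.le_induction with
  | base =>
    have h := base_eval N
    have e : 3 * (N+1)^2 * (N+1) = 3 * (N+1)^3 := by ring
    rw [e]
    exact h
  | succ m hm ih =>
    show 3 * (∑ k ∈ range (m+2), ∑ j ∈ range (m+2), (N+1 - (k-j) - (j-k)))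
      + N * (N+1) * (N+2) = 3 * (N+1)^2 * (m+2)
    have hstep := step (N+1) m (by omega) (by omega)
    have hnorm : N + 1 - 1 = N := rfl
    rw [hnorm] at hstep
    have h2 : 2 * (3 * (∑ k ∈ range (m+2), ∑ j ∈ range (m+2), (N+1 - (k-j) - (j-k)))
        + N * (N+1) * (N+2)) = 2 * (3 * (N+1)^2 * (m+2)) := by
      zify at hstep ih ⊢
      linear_combination 3 * hstep + 2 * ih
    exact Nat.eq_of_mul_eq_mul_left (by norm_num) h2


lemma cast_sub_max (a b : ℕ) : ((a - b : ℕ) : ℝ) = max 0 ((a:ℝ) - (b:ℝ)) := by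
  rcases le_total a b with h | h
  · rw [Nat.sub_eq_zero_of_le h, max_eq_left (by
      have : (a:ℝ) ≤ (b:ℝ) := by exact_mod_cast h
      linarith)]
    simp
  · rw [Nat.cast_sub h, max_eq_right (by
      have : (b:ℝ) ≤ (a:ℝ) := by exact_mod_cast h
      linarith)]

theorem max_ent_fidelity (N ν : ℕ) (hN : 1 ≤ N) (hν : N ≤ ν) :
    2 / ((N : ℝ) + 2) +
      ∑ k : Fin (ν + 1), ∑ j : Fin (ν + 1), (if k = j then 0 else
        max 0 ((N : ℝ) + 1 - |(k.1 : ℝ) - (j.1 : ℝ)|) /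
          (((N : ℝ) + 1) * ((N : ℝ) + 2) * ((ν : ℝ) + 1)))
      = 1 - (N : ℝ) / (3 * ((ν : ℝ) + 1)) := by
  have hN1 : (0:ℝ) < (N:ℝ) + 1 := by positivity
  have hN2 : (0:ℝ) < (N:ℝ) + 2 := by positivity
  have hv1 : (0:ℝ) < (ν:ℝ) + 1 := by positivity
  set D : ℝ := ((N : ℝ) + 1) * ((N : ℝ) + 2) * ((ν : ℝ) + 1) with hD
  have hDpos : 0 < D := by rw [hD]; positivity
  have hterm : ∀ k j : Fin (ν+1),
      (if k = j then (0:ℝ) else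
        max 0 ((N : ℝ) + 1 - |(k.1 : ℝ) - (j.1 : ℝ)|) / D)
      = ((N + 1 - (k.1 - j.1) - (j.1 - k.1) : ℕ) : ℝ) / D
        - (if k = j then ((N:ℝ)+1)/D else 0) := by
    intro k j
    by_cases h : k = j
    · subst h
      simp
    · have hv : k.1 ≠ j.1 := fun hh => h (Fin.ext hh)
      simp only [if_neg h, sub_zero]
      congr 1
      rcases le_total k.1 j.1 with hle | hle
      · have habs : |(k.1 : ℝ) - (j.1 : ℝ)| = ((j.1 - k.1 : ℕ) : ℝ) := by
          rw [Nat.cast_sub hle, abs_sub_comm, abs_of_nonneg (by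
            have : (k.1:ℝ) ≤ (j.1:ℝ) := by exact_mod_cast hle
            linarith)]
        have h0 : k.1 - j.1 = 0 := Nat.sub_eq_zero_of_le hle
        rw [habs, h0, Nat.sub_zero, cast_sub_max (N+1) (j.1 - k.1)]
        push_cast
        norm_num
      · have habs : |(k.1 : ℝ) - (j.1 : ℝ)| = ((k.1 - j.1 : ℕ) : ℝ) := by
          rw [Nat.cast_sub hle, abs_of_nonneg (by
            have : (j.1:ℝ) ≤ (k.1:ℝ) := by exact_mod_cast hle
            linarith)]
        have h0 : j.1 - k.1 = 0 := Nat.sub_eq_zero_of_le hle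
        rw [habs, h0, Nat.sub_zero, cast_sub_max (N+1) (k.1 - j.1)]
        push_cast
        norm_num
  have hsum : (∑ k : Fin (ν + 1), ∑ j : Fin (ν + 1), (if k = j then (0:ℝ) else
        max 0 ((N : ℝ) + 1 - |(k.1 : ℝ) - (j.1 : ℝ)|) / D))
      = ((∑ k ∈ range (ν+1), ∑ j ∈ range (ν+1), (N + 1 - (k - j) - (j - k)) : ℕ) : ℝ) / D
        - ((ν:ℝ)+1) * (((N:ℝ)+1)/D) := by
    rw [Finset.sum_congr rfl (fun k _ => Finset.sum_congr rfl (fun j _ => hterm k j))]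
    rw [Finset.sum_congr rfl (fun (k : Fin (ν+1)) _ => Finset.sum_sub_distrib
      (f := fun j : Fin (ν+1) => ((N + 1 - (k.1 - j.1) - (j.1 - k.1) : ℕ) : ℝ) / D)
      (g := fun j : Fin (ν+1) => if k = j then ((N:ℝ)+1)/D else 0))]
    rw [Finset.sum_sub_distrib]
    have hdiag : (∑ k : Fin (ν+1), ∑ j : Fin (ν+1), (if k = j then ((N:ℝ)+1)/D else 0))
        = ((ν:ℝ)+1) * (((N:ℝ)+1)/D) := by
      simp [Finset.sum_ite_eq]
    rw [hdiag]
    congr 1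
    have p1 : ∀ k : Fin (ν+1),
        ∑ j : Fin (ν+1), ((N + 1 - (k.1 - j.1) - (j.1 - k.1) : ℕ) : ℝ) / D
        = ((∑ j ∈ range (ν+1), (N + 1 - (k.1 - j) - (j - k.1)) : ℕ) : ℝ) / D := by
      intro k
      rw [← Finset.sum_div]
      congr 1
      rw [Nat.cast_sum]
      exact Fin.sum_univ_eq_sum_range (fun j => ((N + 1 - (k.1 - j) - (j - k.1) : ℕ) : ℝ)) (ν+1)
    rw [Finset.sum_congr rfl (fun k _ => p1 k), ← Finset.sum_div]
    congr 1
    rw [Nat.cast_sum]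
    exact Fin.sum_univ_eq_sum_range
      (fun k => ((∑ j ∈ range (ν+1), (N + 1 - (k - j) - (j - k)) : ℕ) : ℝ)) (ν+1)
  rw [hsum]
  set s : ℝ := ((∑ k ∈ range (ν+1), ∑ j ∈ range (ν+1), (N + 1 - (k - j) - (j - k)) : ℕ) : ℝ)
    with hs
  have hkey : 3 * s + (N:ℝ) * ((N:ℝ)+1) * ((N:ℝ)+2) = 3 * ((N:ℝ)+1)^2 * ((ν:ℝ)+1) := by
    rw [hs]
    exact_mod_cast sum_nat_eval N ν hν
  rw [hD]
  field_simp
  nlinarith [hkey, sq_nonneg ((N:ℝ)+1)]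
end

section
/- Let N ≥ 1 and ν ≥ N. For the maximally entangled resource state ρ_{k,j} = 1/(ν+1), the average final entanglement E = (π/8) Σ_{k≠j} max{0, N+1-|k-j|}/((N+1)(ν+1)) equals πN(3ν-N+1)/(24(ν+1)). -/
open Finset Real

lemma gaussR (n : ℕ) : ∑ j ∈ Finset.range n, (j : ℝ) = n * (n - 1) / 2 := by
  induction n with
  | zero => simp
  | succ n ih => rw [Finset.sum_range_succ, ih]; push_cast; ring

lemma absSum (n : ℕ) :
    ∑ k ∈ Finset.range n, ∑ j ∈ Finset.range n, |(k : ℝ) - (j : ℝ)|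
      = n * (n ^ 2 - 1) / 3 := by
  induction n with
  | zero => simp
  | succ n ih =>
    simp only [Finset.sum_range_succ]
    rw [Finset.sum_add_distrib, ih]
    have h1 : ∑ k ∈ Finset.range n, |(k : ℝ) - (n : ℝ)|
        = ∑ k ∈ Finset.range n, ((n : ℝ) - (k : ℝ)) := by
      refine Finset.sum_congr rfl fun k hk => ?_
      rw [abs_sub_comm, abs_of_nonneg]
      have : (k : ℝ) ≤ n := by exact_mod_cast (Finset.mem_range.mp hk).le
      linarith
    have h2 : ∑ j ∈ Finset.range n, |(n : ℝ) - (j : ℝ)|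
        = ∑ j ∈ Finset.range n, ((n : ℝ) - (j : ℝ)) := by
      refine Finset.sum_congr rfl fun k hk => ?_
      rw [abs_of_nonneg]
      have : (k : ℝ) ≤ n := by exact_mod_cast (Finset.mem_range.mp hk).le
      linarith
    rw [h1, h2, Finset.sum_sub_distrib, gaussR,
      Finset.sum_const, Finset.card_range, nsmul_eq_mul]
    simp only [sub_self, abs_zero]
    push_cast
    ring

lemma boundary (N : ℕ) : ∀ ν : ℕ, N ≤ ν →
    ∑ j ∈ Finset.range (ν + 1), max 0 ((N : ℝ) + 1 - ((ν : ℝ) + 1 - (j : ℝ)))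
      = N * (N + 1) / 2 := by
  refine Nat.le_induction ?_ ?_
  · have h : ∀ j ∈ Finset.range (N + 1),
        max 0 ((N : ℝ) + 1 - ((N : ℝ) + 1 - (j : ℝ))) = (j : ℝ) := by
      intro j hj
      rw [show (N : ℝ) + 1 - ((N : ℝ) + 1 - (j : ℝ)) = (j : ℝ) by ring,
        max_eq_right (by positivity)]
    rw [Finset.sum_congr rfl h, gaussR]
    push_cast; ring
  · intro ν hν ih
    rw [Finset.sum_range_succ']
    have h0 : max 0 ((N : ℝ) + 1 - (((ν : ℕ) + 1 : ℕ) + 1 - ((0 : ℕ) : ℝ))) = 0 := by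
      rw [max_eq_left]
      have : (N : ℝ) ≤ ν := by exact_mod_cast hν
      push_cast
      linarith
    rw [show ((0:ℕ):ℝ) = (0:ℝ) by norm_num] at h0
    push_cast at h0 ⊢
    rw [h0, add_zero, ← ih]
    refine Finset.sum_congr rfl fun j hj => ?_
    ring_nf

lemma mainSum (N : ℕ) : ∀ ν : ℕ, N ≤ ν →
    ∑ k ∈ Finset.range (ν + 1), ∑ j ∈ Finset.range (ν + 1),
        (if k = j then (0 : ℝ) else max 0 ((N : ℝ) + 1 - |(k : ℝ) - (j : ℝ)|))
      = N * (N + 1) * (3 * ν - N + 1) / 3 := by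
  refine Nat.le_induction ?_ ?_
  · -- base case ν = N
    have h : ∀ k ∈ Finset.range (N + 1), ∀ j ∈ Finset.range (N + 1),
        (if k = j then (0 : ℝ) else max 0 ((N : ℝ) + 1 - |(k : ℝ) - (j : ℝ)|))
          = ((N : ℝ) + 1 - |(k : ℝ) - (j : ℝ)|)
            - (if k = j then ((N : ℝ) + 1) else 0) := by
      intro k hk j hj
      have hk' : (k : ℝ) ≤ N := by
        exact_mod_cast Nat.lt_succ_iff.mp (Finset.mem_range.mp hk)
      have hj' : (j : ℝ) ≤ N := by
        exact_mod_cast Nat.lt_succ_iff.mp (Finset.mem_range.mp hj)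
      have hk0 : (0 : ℝ) ≤ (k : ℝ) := Nat.cast_nonneg k
      have hj0 : (0 : ℝ) ≤ (j : ℝ) := Nat.cast_nonneg j
      have habs : |(k : ℝ) - (j : ℝ)| ≤ N := by
        rw [abs_sub_le_iff]; constructor <;> linarith
      by_cases hkj : k = j
      · simp [hkj]
      · rw [if_neg hkj, if_neg hkj, max_eq_right (by linarith), sub_zero]
    rw [Finset.sum_congr rfl (fun k hk => Finset.sum_congr rfl (h k hk))]
    simp only [Finset.sum_sub_distrib]
    have hd : ∑ k ∈ Finset.range (N + 1), ∑ j ∈ Finset.range (N + 1),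
        (if k = j then ((N : ℝ) + 1) else 0) = (N + 1) * ((N : ℝ) + 1) := by
      rw [Finset.sum_congr rfl (fun k hk => by
        rw [Finset.sum_ite_eq, if_pos hk]), Finset.sum_const, Finset.card_range,
        nsmul_eq_mul]
      push_cast
      ring
    rw [hd, absSum, Finset.sum_const, Finset.card_range]
    simp only [Finset.sum_const, Finset.card_range, nsmul_eq_mul]
    push_cast
    ring
  · intro ν hν ih
    rw [Finset.sum_range_succ,
      Finset.sum_congr rfl (fun k (_ : k ∈ Finset.range (ν + 1)) =>
        Finset.sum_range_succ
          (fun j => if k = j then (0 : ℝ) else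
            max 0 ((N : ℝ) + 1 - |(k : ℝ) - (j : ℝ)|)) (ν + 1)),
      Finset.sum_add_distrib, ih]
    have hcol : ∑ k ∈ Finset.range (ν + 1),
        (if k = ν + 1 then (0 : ℝ) else
          max 0 ((N : ℝ) + 1 - |(k : ℝ) - ((ν + 1 : ℕ) : ℝ)|))
        = N * (N + 1) / 2 := by
      refine (Finset.sum_congr rfl fun k hk => ?_).trans (boundary N ν hν)
      have hklt : k < ν + 1 := Finset.mem_range.mp hk
      have hkle : (k : ℝ) ≤ (ν : ℝ) + 1 := by
        have : (k : ℝ) ≤ ((ν + 1 : ℕ) : ℝ) := by exact_mod_cast hklt.le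
        push_cast at this; linarith
      rw [if_neg (by omega), abs_sub_comm, abs_of_nonneg (by push_cast; linarith)]
      push_cast
      ring_nf
    have hrow : ∑ j ∈ Finset.range (ν + 1),
        (if ν + 1 = j then (0 : ℝ) else
          max 0 ((N : ℝ) + 1 - |((ν + 1 : ℕ) : ℝ) - (j : ℝ)|))
        = N * (N + 1) / 2 := by
      refine (Finset.sum_congr rfl fun j hj => ?_).trans (boundary N ν hν)
      have hjlt : j < ν + 1 := Finset.mem_range.mp hj
      have hjle : (j : ℝ) ≤ (ν : ℝ) + 1 := by
        have : (j : ℝ) ≤ ((ν + 1 : ℕ) : ℝ) := by exact_mod_cast hjlt.le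
        push_cast at this; linarith
      rw [if_neg (by omega), abs_of_nonneg (by push_cast; linarith)]
      push_cast
      ring_nf
    rw [hcol, Finset.sum_range_succ, hrow, if_pos rfl]
    push_cast
    ring

theorem max_ent_entanglement (N ν : ℕ) (hN : 1 ≤ N) (hν : N ≤ ν) :
    (π / 8) * ∑ k : Fin (ν + 1), ∑ j : Fin (ν + 1), (if k = j then 0 else
        max 0 ((N : ℝ) + 1 - |(k.1 : ℝ) - (j.1 : ℝ)|) /
          (((N : ℝ) + 1) * ((ν : ℝ) + 1)))
      = π * (N : ℝ) * (3 * (ν : ℝ) - (N : ℝ) + 1) / (24 * ((ν : ℝ) + 1)) := by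
  have step1 : ∀ k j : Fin (ν + 1),
      (if k = j then (0 : ℝ) else
        max 0 ((N : ℝ) + 1 - |(k.1 : ℝ) - (j.1 : ℝ)|) /
          (((N : ℝ) + 1) * ((ν : ℝ) + 1)))
      = (if (k : ℕ) = (j : ℕ) then (0 : ℝ) else
          max 0 ((N : ℝ) + 1 - |(k.1 : ℝ) - (j.1 : ℝ)|)) /
            (((N : ℝ) + 1) * ((ν : ℝ) + 1)) := by
    intro k j
    by_cases h : k = j
    · simp [h, Fin.ext_iff.mp h]
    · rw [if_neg h, if_neg (fun hh => h (Fin.ext hh))]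
  simp only [step1]
  simp only [← Finset.sum_div]
  have h2 : (∑ k : Fin (ν + 1), ∑ j : Fin (ν + 1),
      (if (k : ℕ) = (j : ℕ) then (0 : ℝ) else
        max 0 ((N : ℝ) + 1 - |(k.1 : ℝ) - (j.1 : ℝ)|)))
      = ∑ k ∈ Finset.range (ν + 1), ∑ j ∈ Finset.range (ν + 1),
        (if k = j then (0 : ℝ) else max 0 ((N : ℝ) + 1 - |(k : ℝ) - (j : ℝ)|)) := by
    rw [Fin.sum_univ_eq_sum_range (fun k => ∑ j : Fin (ν + 1),
      (if k = (j : ℕ) then (0 : ℝ) else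
        max 0 ((N : ℝ) + 1 - |(k : ℝ) - (j.1 : ℝ)|)))]
    exact Finset.sum_congr rfl fun k _ =>
      Fin.sum_univ_eq_sum_range (fun j =>
        (if k = j then (0 : ℝ) else max 0 ((N : ℝ) + 1 - |(k : ℝ) - (j : ℝ)|))) _
  rw [h2, mainSum N ν hν]
  have hN1 : ((N : ℝ) + 1) ≠ 0 := by positivity
  have hν1 : ((ν : ℝ) + 1) ≠ 0 := by positivity
  field_simp
  ring
end

section
/- If a Hermitian positive semidefinite trace-1 resource state ρ(0) with entries indexed 0..ν has all entries ρ_{k,j}(0) ≥ 0 for |k-j| < N+1, and fidelity f(0) > 2/(N+2), then for every t ≥ 0 the dephased state ρ_{k,j}(t) = e^{-(t/2)λ(k-j)²}ρ_{k,j}(0) (λ > 0) still has fidelity f(t) > 2/(N+2). -/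
open Finset Real

theorem dephasing_preserves_advantage (N ν : ℕ) (hN : 1 ≤ N) (hν : N ≤ ν)
    (ρ : Matrix (Fin (ν + 1)) (Fin (ν + 1)) ℝ)
    (hsymm : ρ.IsHermitian) (hpsd : ρ.PosSemidef)
    (htr : ρ.trace = 1)
    (hnn : ∀ k j : Fin (ν + 1), |(k.1 : ℝ) - (j.1 : ℝ)| < (N : ℝ) + 1 → 0 ≤ ρ k j)
    (lam : ℝ) (hlam : 0 < lam)
    (h0 : 2 / ((N : ℝ) + 2) +
      ∑ k : Fin (ν + 1), ∑ j : Fin (ν + 1), (if k = j then 0 else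
        max 0 ((N : ℝ) + 1 - |(k.1 : ℝ) - (j.1 : ℝ)|) / (((N : ℝ) + 1) * ((N : ℝ) + 2))
          * ρ k j)
      > 2 / ((N : ℝ) + 2)) :
    ∀ t : ℝ, 0 ≤ t →
      2 / ((N : ℝ) + 2) +
        ∑ k : Fin (ν + 1), ∑ j : Fin (ν + 1), (if k = j then 0 else
          max 0 ((N : ℝ) + 1 - |(k.1 : ℝ) - (j.1 : ℝ)|) / (((N : ℝ) + 1) * ((N : ℝ) + 2))
            * (exp (-(t / 2) * lam * ((k.1 : ℝ) - (j.1 : ℝ)) ^ 2) * ρ k j))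
        > 2 / ((N : ℝ) + 2) := by

  intro t ht
  have hS0 : 0 < ∑ k : Fin (ν + 1), ∑ j : Fin (ν + 1), (if k = j then 0 else
      max 0 ((N : ℝ) + 1 - |(k.1 : ℝ) - (j.1 : ℝ)|) / (((N : ℝ) + 1) * ((N : ℝ) + 2))
        * ρ k j) := by linarith
  have hcpos : 0 < Real.exp (-(t / 2) * lam * (ν : ℝ) ^ 2) := Real.exp_pos _
  have key : ∀ k j : Fin (ν + 1),
      Real.exp (-(t / 2) * lam * (ν : ℝ) ^ 2) * (if k = j then 0 else
        max 0 ((N : ℝ) + 1 - |(k.1 : ℝ) - (j.1 : ℝ)|) / (((N : ℝ) + 1) * ((N : ℝ) + 2))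
          * ρ k j)
      ≤ (if k = j then 0 else
        max 0 ((N : ℝ) + 1 - |(k.1 : ℝ) - (j.1 : ℝ)|) / (((N : ℝ) + 1) * ((N : ℝ) + 2))
          * (exp (-(t / 2) * lam * ((k.1 : ℝ) - (j.1 : ℝ)) ^ 2) * ρ k j)) := by
    intro k j
    by_cases hkj : k = j
    · simp [hkj]
    · simp only [hkj, if_false]
      by_cases hm : (N : ℝ) + 1 - |(k.1 : ℝ) - (j.1 : ℝ)| ≤ 0
      · rw [max_eq_left hm]
        simp
      · push_neg at hm
        have hρ : 0 ≤ ρ k j := hnn k j (by linarith)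
        have hmpos : 0 ≤ max 0 ((N : ℝ) + 1 - |(k.1 : ℝ) - (j.1 : ℝ)|) /
            (((N : ℝ) + 1) * ((N : ℝ) + 2)) := by positivity
        have hsq : ((k.1 : ℝ) - (j.1 : ℝ)) ^ 2 ≤ (ν : ℝ) ^ 2 := by
          have hk : (k.1 : ℝ) ≤ (ν : ℝ) := by
            exact_mod_cast Nat.lt_succ_iff.mp k.2
          have hj : (j.1 : ℝ) ≤ (ν : ℝ) := by
            exact_mod_cast Nat.lt_succ_iff.mp j.2
          have hk0 : (0:ℝ) ≤ (k.1 : ℝ) := Nat.cast_nonneg _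
          have hj0 : (0:ℝ) ≤ (j.1 : ℝ) := Nat.cast_nonneg _
          nlinarith
        have hexp : Real.exp (-(t / 2) * lam * (ν : ℝ) ^ 2)
            ≤ Real.exp (-(t / 2) * lam * ((k.1 : ℝ) - (j.1 : ℝ)) ^ 2) := by
          apply Real.exp_le_exp.mpr
          nlinarith [mul_nonneg (by positivity : (0:ℝ) ≤ t / 2 * lam)
            (sub_nonneg.mpr hsq)]
        calc Real.exp (-(t / 2) * lam * (ν : ℝ) ^ 2) *
            (max 0 ((N : ℝ) + 1 - |(k.1 : ℝ) - (j.1 : ℝ)|) /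
              (((N : ℝ) + 1) * ((N : ℝ) + 2)) * ρ k j)
            = max 0 ((N : ℝ) + 1 - |(k.1 : ℝ) - (j.1 : ℝ)|) /
              (((N : ℝ) + 1) * ((N : ℝ) + 2)) *
              (Real.exp (-(t / 2) * lam * (ν : ℝ) ^ 2) * ρ k j) := by ring
          _ ≤ _ := by
              apply mul_le_mul_of_nonneg_left _ hmpos
              exact mul_le_mul_of_nonneg_right hexp hρ
  have hsum : Real.exp (-(t / 2) * lam * (ν : ℝ) ^ 2) *
      (∑ k : Fin (ν + 1), ∑ j : Fin (ν + 1), (if k = j then 0 else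
        max 0 ((N : ℝ) + 1 - |(k.1 : ℝ) - (j.1 : ℝ)|) / (((N : ℝ) + 1) * ((N : ℝ) + 2))
          * ρ k j))
      ≤ ∑ k : Fin (ν + 1), ∑ j : Fin (ν + 1), (if k = j then 0 else
        max 0 ((N : ℝ) + 1 - |(k.1 : ℝ) - (j.1 : ℝ)|) / (((N : ℝ) + 1) * ((N : ℝ) + 2))
          * (exp (-(t / 2) * lam * ((k.1 : ℝ) - (j.1 : ℝ)) ^ 2) * ρ k j)) := by
    rw [Finset.mul_sum]
    apply Finset.sum_le_sum
    intro k _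
    rw [Finset.mul_sum]
    exact Finset.sum_le_sum fun j _ => key k j
  nlinarith
end

section
/- Suppose for each ν, x^{(1)}(ν) and x^{(2)}(ν) are unit vectors in ℝ^{ν+1} with non-negative entries whose fidelities F_ν(x^{(i)}(ν)) → 1 as ν → ∞, and ⟨x^{(1)}(ν), x^{(2)}(ν)⟩ → 0. Let c₁(ν), c₂(ν) ≥ 0 be such that c₁x^{(1)} + c₂x^{(2)} is a unit vector. Then F_ν(c₁x^{(1)} + c₂x^{(2)}) → 1 as ν → ∞. -/
open Finset Filter Topology

/-- Teleportation fidelity of a pure resource state with real coefficients. -/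
noncomputable def pureFid (N ν : ℕ) (x : Fin (ν + 1) → ℝ) : ℝ :=
  1 / ((N : ℝ) + 2) +
    ∑ k : Fin (ν + 1), ∑ j : Fin (ν + 1),
      max 0 ((N : ℝ) + 1 - |(k.1 : ℝ) - (j.1 : ℝ)|) / (((N : ℝ) + 1) * ((N : ℝ) + 2))
        * x k * x j

noncomputable def indW (N ν : ℕ) (m : ℤ) (k : Fin (ν + 1)) : ℝ :=
  if m ≤ (k : ℤ) ∧ (k : ℤ) ≤ m + N then 1 else 0

lemma kernel_eq (N ν : ℕ) (k j : Fin (ν + 1)) :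
    max 0 ((N : ℝ) + 1 - |(k.1 : ℝ) - (j.1 : ℝ)|) =
      ∑ m ∈ Finset.Icc (-(N : ℤ)) (ν : ℤ), indW N ν m k * indW N ν m j := by
  classical
  have hk : (k : ℤ) ≤ (ν : ℤ) := by exact_mod_cast Nat.lt_succ_iff.mp k.2
  have hj : (j : ℤ) ≤ (ν : ℤ) := by exact_mod_cast Nat.lt_succ_iff.mp j.2
  have h1 : ∀ m : ℤ, indW N ν m k * indW N ν m j =
      if (m ≤ (k : ℤ) ∧ (k : ℤ) ≤ m + N) ∧ (m ≤ (j : ℤ) ∧ (j : ℤ) ≤ m + N)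
      then (1 : ℝ) else 0 := by
    intro m
    unfold indW
    split_ifs with h1 h2 h3 <;> simp_all
  rw [Finset.sum_congr rfl fun m _ => h1 m, Finset.sum_boole]
  have h2 : (Finset.Icc (-(N : ℤ)) (ν : ℤ)).filter
      (fun m => (m ≤ (k : ℤ) ∧ (k : ℤ) ≤ m + N) ∧ (m ≤ (j : ℤ) ∧ (j : ℤ) ≤ m + N))
      = Finset.Icc (max (k : ℤ) (j : ℤ) - N) (min (k : ℤ) (j : ℤ)) := by
    ext m
    simp only [Finset.mem_filter, Finset.mem_Icc, le_min_iff, max_le_iff, sub_le_iff_le_add]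
    omega
  rw [h2, Int.card_Icc]
  have h3 : min (k : ℤ) (j : ℤ) + 1 - (max (k : ℤ) (j : ℤ) - N) = (N : ℤ) + 1 - |(k : ℤ) - (j : ℤ)| := by
    rcases abs_cases ((k : ℤ) - (j : ℤ)) with ⟨h, h2⟩ | ⟨h, h2⟩ <;> rcases le_total (k : ℤ) (j : ℤ) with hle | hle <;> simp [max_eq_left, max_eq_right, min_eq_left, min_eq_right, hle] <;> omega
  rw [h3]
  have h4 : (((N : ℤ) + 1 - |(k : ℤ) - (j : ℤ)|).toNat : ℤ)
      = max ((N : ℤ) + 1 - |(k : ℤ) - (j : ℤ)|) 0 := Int.toNat_eq_max _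
  have h5 : (((N : ℤ) + 1 - |(k : ℤ) - (j : ℤ)|).toNat : ℝ)
      = max ((N : ℝ) + 1 - |(k.1 : ℝ) - (j.1 : ℝ)|) 0 := by
    have := congrArg (fun z : ℤ => (z : ℝ)) h4
    push_cast at this ⊢
    convert this using 2
  rw [h5, max_comm]

lemma indW_nonneg (N ν : ℕ) (m : ℤ) (k : Fin (ν + 1)) : 0 ≤ indW N ν m k := by
  unfold indW; split_ifs <;> norm_num

lemma indW_sq (N ν : ℕ) (m : ℤ) (k : Fin (ν + 1)) : indW N ν m k ^ 2 = indW N ν m k := by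
  unfold indW; split_ifs <;> norm_num

lemma indW_card (N ν : ℕ) (m : ℤ) : ∑ k : Fin (ν + 1), indW N ν m k ≤ (N : ℝ) + 1 := by
  classical
  unfold indW
  rw [Finset.sum_boole]
  have h : (Finset.univ.filter (fun k : Fin (ν+1) => m ≤ (k : ℤ) ∧ (k : ℤ) ≤ m + N)).card
      ≤ (Finset.Icc m (m + N)).card := by
    refine Finset.card_le_card_of_injOn (fun k => ((k : ℕ) : ℤ)) ?_ ?_
    · intro k hk
      simp only [Finset.coe_filter, Finset.mem_coe, Finset.mem_filter, Finset.mem_univ, true_and, Set.mem_setOf_eq] at hk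
      simp [Finset.mem_Icc, hk.1, hk.2]
    · intro a _ b _ hab
      exact Fin.ext (by simpa using hab)
  calc ((Finset.univ.filter (fun k : Fin (ν+1) => m ≤ (k : ℤ) ∧ (k : ℤ) ≤ m + N)).card : ℝ)
      ≤ ((Finset.Icc m (m + N)).card : ℝ) := by exact_mod_cast h
    _ = (N : ℝ) + 1 := by
        rw [Int.card_Icc]
        have h2 : m + (N : ℤ) + 1 - m = ((N + 1 : ℕ) : ℤ) := by push_cast; ring
        rw [h2, Int.toNat_natCast]; push_cast; ring

lemma indW_col (N ν : ℕ) (k : Fin (ν + 1)) :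
    ∑ m ∈ Finset.Icc (-(N : ℤ)) (ν : ℤ), indW N ν m k = (N : ℝ) + 1 := by
  classical
  have hk0 : (0 : ℤ) ≤ (k : ℤ) := Int.ofNat_nonneg _
  have hk : (k : ℤ) ≤ (ν : ℤ) := by exact_mod_cast Nat.lt_succ_iff.mp k.2
  unfold indW
  rw [Finset.sum_boole]
  have h : (Finset.Icc (-(N : ℤ)) (ν : ℤ)).filter (fun m => m ≤ (k : ℤ) ∧ (k : ℤ) ≤ m + N)
      = Finset.Icc ((k : ℤ) - N) (k : ℤ) := by
    ext m; simp only [Finset.mem_filter, Finset.mem_Icc]; omega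
  rw [h, Int.card_Icc]
  have h2 : (k : ℤ) + 1 - ((k : ℤ) - N) = ((N + 1 : ℕ) : ℤ) := by push_cast; ring
  rw [h2, Int.toNat_natCast]; push_cast; ring

lemma fejer_bound (N ν : ℕ) (x : Fin (ν + 1) → ℝ) :
    ∑ k : Fin (ν+1), ∑ j : Fin (ν+1), max 0 ((N : ℝ) + 1 - |(k.1 : ℝ) - (j.1 : ℝ)|) * x k * x j
      ≤ ((N : ℝ) + 1) ^ 2 * ∑ k, x k ^ 2 := by
  classical
  set M := Finset.Icc (-(N : ℤ)) (ν : ℤ) with hM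
  have hm : ∀ m : ℤ, (∑ k, indW N ν m k * x k) ^ 2
      = ∑ k : Fin (ν+1), ∑ j : Fin (ν+1), (indW N ν m k * indW N ν m j) * (x k * x j) := by
    intro m
    rw [sq, Finset.sum_mul_sum]
    exact Finset.sum_congr rfl fun k _ => Finset.sum_congr rfl fun j _ => by ring
  have h1 : ∑ m ∈ M, (∑ k, indW N ν m k * x k) ^ 2
      = ∑ k : Fin (ν+1), ∑ j : Fin (ν+1),
          max 0 ((N : ℝ) + 1 - |(k.1 : ℝ) - (j.1 : ℝ)|) * x k * x j := by
    calc ∑ m ∈ M, (∑ k, indW N ν m k * x k) ^ 2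
        = ∑ m ∈ M, ∑ k : Fin (ν+1), ∑ j : Fin (ν+1),
            (indW N ν m k * indW N ν m j) * (x k * x j) :=
          Finset.sum_congr rfl fun m _ => hm m
      _ = ∑ k : Fin (ν+1), ∑ m ∈ M, ∑ j : Fin (ν+1),
            (indW N ν m k * indW N ν m j) * (x k * x j) := Finset.sum_comm
      _ = ∑ k : Fin (ν+1), ∑ j : Fin (ν+1), ∑ m ∈ M,
            (indW N ν m k * indW N ν m j) * (x k * x j) :=
          Finset.sum_congr rfl fun k _ => Finset.sum_comm
      _ = _ := by
          refine Finset.sum_congr rfl fun k _ => Finset.sum_congr rfl fun j _ => ?_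
          rw [← Finset.sum_mul, hM, ← kernel_eq, mul_assoc]
  rw [← h1]
  have h2 : ∀ m ∈ M, (∑ k, indW N ν m k * x k) ^ 2
      ≤ ((N : ℝ) + 1) * ∑ k, indW N ν m k * x k ^ 2 := by
    intro m _
    have cs' : (∑ k, indW N ν m k * x k) ^ 2
        ≤ (∑ k, indW N ν m k ^ 2) * (∑ k, (indW N ν m k * x k) ^ 2) := by
      have h3 := Finset.sum_mul_sq_le_sq_mul_sq Finset.univ
        (fun k => indW N ν m k) (fun k => indW N ν m k * x k)
      calc (∑ k, indW N ν m k * x k) ^ 2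
          = (∑ k, indW N ν m k * (indW N ν m k * x k)) ^ 2 := by
            congr 1; refine Finset.sum_congr rfl fun k _ => ?_
            rw [← mul_assoc, ← sq, indW_sq]
        _ ≤ (∑ k, indW N ν m k ^ 2) * (∑ k, (indW N ν m k * x k) ^ 2) := h3
    have e1 : ∑ k, indW N ν m k ^ 2 = ∑ k : Fin (ν+1), indW N ν m k :=
      Finset.sum_congr rfl fun k _ => indW_sq N ν m k
    have e2 : ∑ k, (indW N ν m k * x k) ^ 2 = ∑ k, indW N ν m k * x k ^ 2 := by
      refine Finset.sum_congr rfl fun k _ => ?_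
      rw [mul_pow, indW_sq]
    rw [e1, e2] at cs'
    refine cs'.trans ?_
    apply mul_le_mul_of_nonneg_right (indW_card N ν m)
    exact Finset.sum_nonneg fun k _ => mul_nonneg (indW_nonneg N ν m k) (sq_nonneg _)
  calc ∑ m ∈ M, (∑ k, indW N ν m k * x k) ^ 2
      ≤ ∑ m ∈ M, ((N : ℝ) + 1) * ∑ k, indW N ν m k * x k ^ 2 := Finset.sum_le_sum h2
    _ = ((N : ℝ) + 1) * ∑ k : Fin (ν+1), (∑ m ∈ M, indW N ν m k) * x k ^ 2 := by
        rw [← Finset.mul_sum, Finset.sum_comm]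
        congr 1
        exact Finset.sum_congr rfl fun k _ => by rw [Finset.sum_mul]
    _ = ((N : ℝ) + 1) ^ 2 * ∑ k, x k ^ 2 := by
        rw [hM]
        simp_rw [indW_col]
        rw [← Finset.mul_sum]; ring

noncomputable def fidS (N ν : ℕ) (u v : Fin (ν + 1) → ℝ) : ℝ :=
  ∑ k : Fin (ν + 1), ∑ j : Fin (ν + 1),
    max 0 ((N : ℝ) + 1 - |(k.1 : ℝ) - (j.1 : ℝ)|) / (((N : ℝ) + 1) * ((N : ℝ) + 2))
      * u k * v j

lemma pureFid_eq (N ν : ℕ) (x : Fin (ν + 1) → ℝ) :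
    pureFid N ν x = 1 / ((N : ℝ) + 2) + fidS N ν x x := rfl

lemma fidS_nonneg (N ν : ℕ) (u v : Fin (ν + 1) → ℝ)
    (hu : ∀ k, 0 ≤ u k) (hv : ∀ k, 0 ≤ v k) : 0 ≤ fidS N ν u v := by
  refine Finset.sum_nonneg fun k _ => Finset.sum_nonneg fun j _ => ?_
  have hD : (0 : ℝ) ≤ ((N : ℝ) + 1) * ((N : ℝ) + 2) := by positivity
  exact mul_nonneg (mul_nonneg (div_nonneg (le_max_left _ _) hD) (hu k)) (hv j)

lemma fidS_symm (N ν : ℕ) (u v : Fin (ν + 1) → ℝ) : fidS N ν u v = fidS N ν v u := by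
  unfold fidS
  rw [Finset.sum_comm]
  refine Finset.sum_congr rfl fun k _ => Finset.sum_congr rfl fun j _ => ?_
  rw [abs_sub_comm]; ring

lemma fidS_expand (N ν : ℕ) (c d : ℝ) (u v : Fin (ν + 1) → ℝ) :
    fidS N ν (fun k => c * u k + d * v k) (fun k => c * u k + d * v k)
      = c ^ 2 * fidS N ν u u + (c * d) * fidS N ν u v + (c * d) * fidS N ν v u
        + d ^ 2 * fidS N ν v v := by
  have h : ∀ w₁ w₂ : Fin (ν+1) → ℝ, fidS N ν w₁ w₂ =
      ∑ k : Fin (ν+1), ∑ j : Fin (ν+1),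
        max 0 ((N : ℝ) + 1 - |(k.1 : ℝ) - (j.1 : ℝ)|) / (((N : ℝ) + 1) * ((N : ℝ) + 2))
          * w₁ k * w₂ j := fun _ _ => rfl
  simp only [h, Finset.mul_sum, ← Finset.sum_add_distrib]
  refine Finset.sum_congr rfl fun k _ => Finset.sum_congr rfl fun j _ => ?_
  ring

lemma fid_le_one (N ν : ℕ) (x : Fin (ν + 1) → ℝ) (hx : ∑ k, x k ^ 2 = 1) :
    pureFid N ν x ≤ 1 := by
  have hD : (0 : ℝ) < ((N : ℝ) + 1) * ((N : ℝ) + 2) := by positivity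
  have h1 : fidS N ν x x = (∑ k : Fin (ν+1), ∑ j : Fin (ν+1),
      max 0 ((N : ℝ) + 1 - |(k.1 : ℝ) - (j.1 : ℝ)|) * x k * x j)
        / (((N : ℝ) + 1) * ((N : ℝ) + 2)) := by
    unfold fidS
    simp_rw [div_mul_eq_mul_div, Finset.sum_div]
  have h2 := fejer_bound N ν x
  rw [hx, mul_one] at h2
  have h3 : fidS N ν x x ≤ ((N : ℝ) + 1) ^ 2 / (((N : ℝ) + 1) * ((N : ℝ) + 2)) := by
    rw [h1]; gcongr
  rw [pureFid_eq]
  have h4 : ((N : ℝ) + 1) ^ 2 / (((N : ℝ) + 1) * ((N : ℝ) + 2)) = ((N : ℝ) + 1) / ((N : ℝ) + 2) := by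
    field_simp
  rw [h4] at h3
  have h5 : 1 / ((N : ℝ) + 2) + ((N : ℝ) + 1) / ((N : ℝ) + 2) = 1 := by
    field_simp; ring
  linarith

theorem superposition_asymptotically_perfect (N : ℕ) (hN : 1 ≤ N)
    (x₁ x₂ : (ν : ℕ) → Fin (ν + 1) → ℝ)
    (hx₁ : ∀ ν k, 0 ≤ x₁ ν k) (hx₂ : ∀ ν k, 0 ≤ x₂ ν k)
    (hn₁ : ∀ ν, ∑ k, (x₁ ν k) ^ 2 = 1) (hn₂ : ∀ ν, ∑ k, (x₂ ν k) ^ 2 = 1)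
    (hf₁ : Tendsto (fun ν => pureFid N ν (x₁ ν)) atTop (𝓝 1))
    (hf₂ : Tendsto (fun ν => pureFid N ν (x₂ ν)) atTop (𝓝 1))
    (horth : Tendsto (fun ν => ∑ k, x₁ ν k * x₂ ν k) atTop (𝓝 0))
    (c₁ c₂ : ℕ → ℝ) (hc₁ : ∀ ν, 0 ≤ c₁ ν) (hc₂ : ∀ ν, 0 ≤ c₂ ν)
    (hnc : ∀ ν, ∑ k, (c₁ ν * x₁ ν k + c₂ ν * x₂ ν k) ^ 2 = 1) :
    Tendsto (fun ν => pureFid N ν (fun k => c₁ ν * x₁ ν k + c₂ ν * x₂ ν k))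
      atTop (𝓝 1) := by
  set a : ℝ := ((N : ℝ) + 1) / ((N : ℝ) + 2) with ha
  have haeq : 1 / ((N : ℝ) + 2) + a = 1 := by
    rw [ha]; field_simp; ring
  have ha0 : 0 ≤ a := by positivity
  set t : ℕ → ℝ := fun ν => ∑ k, x₁ ν k * x₂ ν k with htdef
  have ht0 : ∀ ν, 0 ≤ t ν := fun ν =>
    Finset.sum_nonneg fun k _ => mul_nonneg (hx₁ ν k) (hx₂ ν k)
  -- normalization expansion
  have hnorm : ∀ ν, c₁ ν ^ 2 + 2 * (c₁ ν * c₂ ν) * t ν + c₂ ν ^ 2 = 1 := by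
    intro ν
    have h := hnc ν
    have e : ∀ k : Fin (ν + 1), (c₁ ν * x₁ ν k + c₂ ν * x₂ ν k) ^ 2
        = c₁ ν ^ 2 * x₁ ν k ^ 2 + 2 * (c₁ ν * c₂ ν) * (x₁ ν k * x₂ ν k)
          + c₂ ν ^ 2 * x₂ ν k ^ 2 := fun k => by ring
    rw [Finset.sum_congr rfl fun k _ => e k, Finset.sum_add_distrib,
      Finset.sum_add_distrib, ← Finset.mul_sum, ← Finset.mul_sum, ← Finset.mul_sum,
      hn₁, hn₂] at h
    simpa using h
  -- per-ν lower bound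
  have hlow : ∀ ν, pureFid N ν (x₁ ν) + pureFid N ν (x₂ ν) - 1 - a * t ν
      ≤ pureFid N ν (fun k => c₁ ν * x₁ ν k + c₂ ν * x₂ ν k) := by
    intro ν
    have hS12 : 0 ≤ fidS N ν (x₁ ν) (x₂ ν) := fidS_nonneg _ _ _ _ (hx₁ ν) (hx₂ ν)
    have hS21 : 0 ≤ fidS N ν (x₂ ν) (x₁ ν) := fidS_nonneg _ _ _ _ (hx₂ ν) (hx₁ ν)
    have hA1 : fidS N ν (x₁ ν) (x₁ ν) ≤ a := by
      have := fid_le_one N ν (x₁ ν) (hn₁ ν)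
      rw [pureFid_eq] at this; linarith
    have hA2 : fidS N ν (x₂ ν) (x₂ ν) ≤ a := by
      have := fid_le_one N ν (x₂ ν) (hn₂ ν)
      rw [pureFid_eq] at this; linarith
    have hc1sq : c₁ ν ^ 2 ≤ 1 := by
      have := hnorm ν
      nlinarith [mul_nonneg (mul_nonneg (hc₁ ν) (hc₂ ν)) (ht0 ν), sq_nonneg (c₂ ν)]
    have hc2sq : c₂ ν ^ 2 ≤ 1 := by
      have := hnorm ν
      nlinarith [mul_nonneg (mul_nonneg (hc₁ ν) (hc₂ ν)) (ht0 ν), sq_nonneg (c₁ ν)]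
    have h2cc : 2 * (c₁ ν * c₂ ν) ≤ 1 := by
      have := hnorm ν
      nlinarith [sq_nonneg (c₁ ν - c₂ ν), mul_nonneg (mul_nonneg (hc₁ ν) (hc₂ ν)) (ht0 ν)]
    rw [pureFid_eq, pureFid_eq, pureFid_eq, fidS_expand]
    have hn := hnorm ν
    nlinarith [mul_nonneg (sub_nonneg.2 hc1sq) (sub_nonneg.2 hA1),
      mul_nonneg (sub_nonneg.2 hc2sq) (sub_nonneg.2 hA2),
      mul_nonneg (mul_nonneg (hc₁ ν) (hc₂ ν)) hS12,
      mul_nonneg (mul_nonneg (hc₁ ν) (hc₂ ν)) hS21,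
      mul_nonneg (mul_nonneg (sub_nonneg.2 h2cc) (ht0 ν)) ha0]
  have hup : ∀ ν, pureFid N ν (fun k => c₁ ν * x₁ ν k + c₂ ν * x₂ ν k) ≤ 1 :=
    fun ν => fid_le_one N ν _ (hnc ν)
  have hL : Tendsto (fun ν => pureFid N ν (x₁ ν) + pureFid N ν (x₂ ν) - 1 - a * t ν)
      atTop (𝓝 1) := by
    have := ((hf₁.add hf₂).sub (tendsto_const_nhds (x := (1:ℝ)))).sub (horth.const_mul a)
    simpa using this
  exact tendsto_of_tendsto_of_tendsto_of_le_of_le hL tendsto_const_nhds hlow hup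
end

section
/- For any unit vector x ∈ ℝ^{ν+1} (ν ≥ N), the fidelity F(x) = 1/(N+2) + Σ_{k,j=0}^{ν} max{0,N+1-|k-j|}/((N+1)(N+2)) x_k x_j satisfies F(x) ≤ 1. -/
open Finset

theorem pure_fidelity_le_one (N ν : ℕ) (hN : 1 ≤ N) (hν : N ≤ ν)
    (x : Fin (ν + 1) → ℝ) (hx : ∑ k, (x k) ^ 2 = 1) :
    1 / ((N : ℝ) + 2) +
      ∑ k : Fin (ν + 1), ∑ j : Fin (ν + 1),
        max 0 ((N : ℝ) + 1 - |(k.1 : ℝ) - (j.1 : ℝ)|) / (((N : ℝ) + 1) * ((N : ℝ) + 2))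
          * x k * x j
      ≤ 1 := by
  have hdpos : (0:ℝ) < ((N:ℝ)+1) * ((N:ℝ)+2) := by positivity
  set w : Fin (ν+1) → ℕ → ℝ := fun k m => if k.1 ≤ m ∧ m ≤ k.1 + N then 1 else 0 with hw
  have hwnn : ∀ k m, 0 ≤ w k m := by
    intro k m; simp only [hw]; split <;> norm_num
  have hw2 : ∀ k m, w k m ^ 2 = w k m := by
    intro k m; simp only [hw]; split <;> norm_num
  have symm_key : ∀ a b : ℕ, a ≤ b → b ≤ ν →
      max 0 ((N : ℝ) + 1 - ((b:ℝ) - (a:ℝ)))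
      = ∑ m ∈ range (ν+N+1),
          (if a ≤ m ∧ m ≤ a + N then (1:ℝ) else 0) *
          (if b ≤ m ∧ m ≤ b + N then (1:ℝ) else 0) := by
    intro a b hab hbv
    have h1 : ∀ m, (if a ≤ m ∧ m ≤ a + N then (1:ℝ) else 0) *
        (if b ≤ m ∧ m ≤ b + N then (1:ℝ) else 0)
        = if (b ≤ m ∧ m < a + N + 1) then (1:ℝ) else 0 := by
      intro m
      by_cases hc : b ≤ m ∧ m < a + N + 1
      · rw [if_pos hc, if_pos (show a ≤ m ∧ m ≤ a + N by omega),
          if_pos (show b ≤ m ∧ m ≤ b + N by omega)]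
        norm_num
      · rw [if_neg hc]
        by_cases ha : a ≤ m ∧ m ≤ a + N
        · rw [if_pos ha, if_neg (show ¬(b ≤ m ∧ m ≤ b + N) by omega)]; ring
        · rw [if_neg ha]; ring
    simp_rw [h1]
    rw [Finset.sum_boole]
    have h2 : (range (ν+N+1)).filter (fun m => b ≤ m ∧ m < a + N + 1)
        = Ico b (a + N + 1) := by
      ext m; simp only [mem_filter, mem_range, mem_Ico]; omega
    rw [h2, Nat.card_Ico]
    rcases le_or_gt b (a + N) with h | h
    · have hc : (b:ℝ) ≤ (a:ℝ) + (N:ℝ) := by exact_mod_cast h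
      rw [Nat.cast_sub (by omega), max_eq_right (by push_cast; linarith)]
      push_cast; ring
    · have hc : (a:ℝ) + (N:ℝ) + 1 ≤ (b:ℝ) := by exact_mod_cast h
      rw [Nat.sub_eq_zero_of_le (by omega), max_eq_left (by push_cast; linarith)]
      norm_num
  have key : ∀ k j : Fin (ν+1), max 0 ((N : ℝ) + 1 - |(k.1 : ℝ) - (j.1 : ℝ)|)
      = ∑ m ∈ range (ν+N+1), w k m * w j m := by
    intro k j
    rcases le_total k.1 j.1 with h | h
    · have habs : |(k.1 : ℝ) - (j.1 : ℝ)| = (j.1:ℝ) - (k.1:ℝ) := by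
        rw [abs_of_nonpos (sub_nonpos.mpr (by exact_mod_cast h))]; ring
      rw [habs]
      exact symm_key k.1 j.1 h (Nat.lt_succ_iff.mp j.isLt)
    · have habs : |(k.1 : ℝ) - (j.1 : ℝ)| = (k.1:ℝ) - (j.1:ℝ) := by
        rw [abs_of_nonneg (sub_nonneg.mpr (by exact_mod_cast h))]
      rw [habs,
        show (∑ m ∈ range (ν+N+1), w k m * w j m)
          = ∑ m ∈ range (ν+N+1), w j m * w k m from
          Finset.sum_congr rfl fun m _ => mul_comm _ _]
      exact symm_key j.1 k.1 h (Nat.lt_succ_iff.mp k.isLt)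
  have hsum_w_m : ∀ k : Fin (ν+1), ∑ m ∈ range (ν+N+1), w k m = (N:ℝ)+1 := by
    intro k
    have hk := k.isLt
    simp only [hw]
    rw [Finset.sum_boole]
    have h2 : (range (ν+N+1)).filter (fun m => k.1 ≤ m ∧ m ≤ k.1 + N)
        = Icc k.1 (k.1+N) := by
      ext m; simp only [mem_filter, mem_range, mem_Icc]; omega
    rw [h2, Nat.card_Icc]
    rw [show k.1 + N + 1 - k.1 = N + 1 from by omega]
    push_cast; ring
  have hsum_w_k : ∀ m, ∑ k : Fin (ν+1), w k m ≤ (N:ℝ)+1 := by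
    intro m
    simp only [hw]
    rw [Fin.sum_univ_eq_sum_range (fun a => if a ≤ m ∧ m ≤ a + N then (1:ℝ) else 0)]
    rw [Finset.sum_boole]
    have hsub : (range (ν+1)).filter (fun a => a ≤ m ∧ m ≤ a+N) ⊆ Ico (m-N) (m+1) := by
      intro a ha; simp only [mem_filter, mem_range, mem_Ico] at *; omega
    calc (((range (ν+1)).filter (fun a => a ≤ m ∧ m ≤ a+N)).card : ℝ)
        ≤ ((Ico (m-N) (m+1)).card : ℝ) := by exact_mod_cast card_le_card hsub
      _ ≤ (N:ℝ)+1 := by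
          rw [Nat.card_Ico]
          exact_mod_cast Nat.cast_le.mpr (show m+1-(m-N) ≤ N+1 from by omega)
  -- main inequality
  have hS : ∑ k : Fin (ν+1), ∑ j : Fin (ν+1),
      max 0 ((N : ℝ) + 1 - |(k.1 : ℝ) - (j.1 : ℝ)|) * x k * x j ≤ ((N:ℝ)+1)^2 := by
    calc ∑ k : Fin (ν+1), ∑ j : Fin (ν+1),
        max 0 ((N : ℝ) + 1 - |(k.1 : ℝ) - (j.1 : ℝ)|) * x k * x j
        = ∑ m ∈ range (ν+N+1), (∑ k : Fin (ν+1), w k m * x k)^2 := by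
          simp_rw [key, Finset.sum_mul]
          have hrhs : ∑ m ∈ range (ν+N+1), (∑ k : Fin (ν+1), w k m * x k)^2
              = ∑ m ∈ range (ν+N+1), ∑ k : Fin (ν+1), ∑ j : Fin (ν+1),
                  w k m * w j m * x k * x j := by
            refine Finset.sum_congr rfl fun m _ => ?_
            rw [sq, Finset.sum_mul_sum]
            exact Finset.sum_congr rfl fun k _ => Finset.sum_congr rfl fun j _ => by ring
          rw [hrhs]
          calc ∑ k : Fin (ν+1), ∑ j : Fin (ν+1), ∑ m ∈ range (ν+N+1),
                w k m * w j m * x k * x j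
              = ∑ k : Fin (ν+1), ∑ m ∈ range (ν+N+1), ∑ j : Fin (ν+1),
                w k m * w j m * x k * x j :=
                Finset.sum_congr rfl fun k _ => Finset.sum_comm
            _ = ∑ m ∈ range (ν+N+1), ∑ k : Fin (ν+1), ∑ j : Fin (ν+1),
                w k m * w j m * x k * x j := Finset.sum_comm
      _ ≤ ∑ m ∈ range (ν+N+1), ((N:ℝ)+1) * (∑ k : Fin (ν+1), w k m * x k ^ 2) := by
          refine Finset.sum_le_sum fun m _ => ?_
          have h0 : (∑ k : Fin (ν+1), w k m * x k)
              = ∑ k : Fin (ν+1), w k m * (w k m * x k) := by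
            refine Finset.sum_congr rfl fun k _ => ?_
            rw [← mul_assoc, ← sq, hw2]
          rw [h0]
          calc (∑ k : Fin (ν+1), w k m * (w k m * x k))^2
              ≤ (∑ k : Fin (ν+1), (w k m)^2) * ∑ k : Fin (ν+1), (w k m * x k)^2 :=
                Finset.sum_mul_sq_le_sq_mul_sq _ _ _
            _ = (∑ k : Fin (ν+1), w k m) * ∑ k : Fin (ν+1), w k m * x k ^ 2 := by
                simp_rw [hw2, mul_pow, hw2]
            _ ≤ ((N:ℝ)+1) * ∑ k : Fin (ν+1), w k m * x k ^ 2 := by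
                refine mul_le_mul_of_nonneg_right (hsum_w_k m) ?_
                exact Finset.sum_nonneg fun k _ =>
                  mul_nonneg (hwnn k m) (sq_nonneg _)
      _ = ((N:ℝ)+1)^2 := by
          rw [← Finset.mul_sum, Finset.sum_comm]
          have h3 : ∑ k : Fin (ν+1), ∑ m ∈ range (ν+N+1), w k m * x k ^ 2
              = ∑ k : Fin (ν+1), ((N:ℝ)+1) * x k ^ 2 := by
            refine Finset.sum_congr rfl fun k _ => ?_
            rw [← Finset.sum_mul, hsum_w_m]
          rw [h3, ← Finset.mul_sum, hx]; ring
  have hrw : ∑ k : Fin (ν + 1), ∑ j : Fin (ν + 1),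
        max 0 ((N : ℝ) + 1 - |(k.1 : ℝ) - (j.1 : ℝ)|) / (((N : ℝ) + 1) * ((N : ℝ) + 2))
          * x k * x j
      = (∑ k : Fin (ν+1), ∑ j : Fin (ν+1),
          max 0 ((N : ℝ) + 1 - |(k.1 : ℝ) - (j.1 : ℝ)|) * x k * x j)
        / (((N : ℝ) + 1) * ((N : ℝ) + 2)) := by
    rw [Finset.sum_div]
    refine Finset.sum_congr rfl fun k _ => ?_
    rw [Finset.sum_div]
    exact Finset.sum_congr rfl fun j _ => by ring
  rw [hrw]
  have h1 : 1/((N:ℝ)+2) + ((N:ℝ)+1)^2/(((N:ℝ)+1)*((N:ℝ)+2)) = 1 := by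
    field_simp; ring
  have h2 : (∑ k : Fin (ν+1), ∑ j : Fin (ν+1),
      max 0 ((N : ℝ) + 1 - |(k.1 : ℝ) - (j.1 : ℝ)|) * x k * x j)
        / (((N : ℝ) + 1) * ((N : ℝ) + 2))
      ≤ ((N:ℝ)+1)^2 / (((N : ℝ) + 1) * ((N : ℝ) + 2)) := by
    gcongr
  linarith
end

section
/- Under the loss master equation with diagonal Lindblad rates, the fidelity of the evolved resource state satisfies f(t) ≥ e^{-2t·max_k η_k} f(0), where η_k ≥ 0 are the decay rates and ρ_{k,j}(t) includes the term e^{-t(η_k+η_j)}ρ_{k,j}(0) plus lower-particle-number components that do not contribute to the fidelity. Consequently, if 2t·max_k η_k < ln(f(0)(N+2)/2), then f(t) > 2/(N+2). -/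
open Finset Real

theorem particle_loss_fidelity_bound (N ν : ℕ) (hN : 1 ≤ N) (hν : N ≤ ν)
    (ρ : Matrix (Fin (ν + 1)) (Fin (ν + 1)) ℝ)
    (hnn : ∀ k j, 0 ≤ ρ k j) (htr : ∑ k, ρ k k = 1)
    (η : Fin (ν + 1) → ℝ) (hη : ∀ k, 0 ≤ η k) (t : ℝ) (ht : 0 ≤ t)
    (f0 ft M : ℝ)
    (hM : M = Finset.univ.sup' Finset.univ_nonempty η)
    (hf0 : f0 = 2 / ((N : ℝ) + 2) +
      ∑ k : Fin (ν + 1), ∑ j : Fin (ν + 1), (if k = j then 0 else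
        max 0 ((N : ℝ) + 1 - |(k.1 : ℝ) - (j.1 : ℝ)|) / (((N : ℝ) + 1) * ((N : ℝ) + 2))
          * ρ k j))
    (hft : ft = (2 / ((N : ℝ) + 2)) * (∑ k : Fin (ν + 1), exp (-2 * t * η k) * ρ k k) +
      ∑ k : Fin (ν + 1), ∑ j : Fin (ν + 1), (if k = j then 0 else
        max 0 ((N : ℝ) + 1 - |(k.1 : ℝ) - (j.1 : ℝ)|) / (((N : ℝ) + 1) * ((N : ℝ) + 2))
          * (exp (-t * (η k + η j)) * ρ k j))) :
    ft ≥ exp (-2 * t * M) * f0 ∧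
    (2 * t * M < Real.log (f0 * ((N : ℝ) + 2) / 2) → ft > 2 / ((N : ℝ) + 2)) := by
  have hNpos : (0:ℝ) < (N : ℝ) + 2 := by positivity
  have hkM : ∀ k, η k ≤ M := fun k => hM ▸ Finset.le_sup' η (Finset.mem_univ k)
  have hM0 : 0 ≤ M := le_trans (hη 0) (hkM 0)
  have hw : ∀ (k j : Fin (ν + 1)),
      0 ≤ max 0 ((N : ℝ) + 1 - |(k.1 : ℝ) - (j.1 : ℝ)|) / (((N : ℝ) + 1) * ((N : ℝ) + 2)) := by
    intro k j; positivity
  -- sum of off-diagonal initial terms is nonneg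
  have hS0 : 0 ≤ ∑ k : Fin (ν + 1), ∑ j : Fin (ν + 1), (if k = j then 0 else
      max 0 ((N : ℝ) + 1 - |(k.1 : ℝ) - (j.1 : ℝ)|) / (((N : ℝ) + 1) * ((N : ℝ) + 2))
        * ρ k j) := by
    apply Finset.sum_nonneg; intro k _
    apply Finset.sum_nonneg; intro j _
    split
    · exact le_refl 0
    · exact mul_nonneg (hw k j) (hnn k j)
  have hf0ge : 2 / ((N : ℝ) + 2) ≤ f0 := by rw [hf0]; linarith
  -- main termwise bound
  have h1 : exp (-2 * t * M) ≤ ∑ k : Fin (ν + 1), exp (-2 * t * η k) * ρ k k := by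
    calc exp (-2 * t * M) = ∑ k : Fin (ν + 1), exp (-2 * t * M) * ρ k k := by
          rw [← Finset.mul_sum, htr, mul_one]
      _ ≤ _ := by
          apply Finset.sum_le_sum; intro k _
          apply mul_le_mul_of_nonneg_right _ (hnn k k)
          apply Real.exp_le_exp.mpr
          nlinarith [hkM k]
  have h2 : exp (-2 * t * M) * (∑ k : Fin (ν + 1), ∑ j : Fin (ν + 1), (if k = j then 0 else
      max 0 ((N : ℝ) + 1 - |(k.1 : ℝ) - (j.1 : ℝ)|) / (((N : ℝ) + 1) * ((N : ℝ) + 2))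
        * ρ k j)) ≤
      ∑ k : Fin (ν + 1), ∑ j : Fin (ν + 1), (if k = j then 0 else
      max 0 ((N : ℝ) + 1 - |(k.1 : ℝ) - (j.1 : ℝ)|) / (((N : ℝ) + 1) * ((N : ℝ) + 2))
        * (exp (-t * (η k + η j)) * ρ k j)) := by
    rw [Finset.mul_sum]
    apply Finset.sum_le_sum; intro k _
    rw [Finset.mul_sum]
    apply Finset.sum_le_sum; intro j _
    split
    · simp
    · rw [mul_comm (exp (-2*t*M)), mul_assoc]
      apply mul_le_mul_of_nonneg_left _ (hw k j)
      rw [mul_comm (ρ k j)]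
      apply mul_le_mul_of_nonneg_right _ (hnn k j)
      apply Real.exp_le_exp.mpr
      nlinarith [hkM k, hkM j]
  have hmain : ft ≥ exp (-2 * t * M) * f0 := by
    rw [hft, hf0]
    nlinarith [mul_le_mul_of_nonneg_left h1 (show (0:ℝ) ≤ 2 / ((N : ℝ) + 2) by positivity), h2]
  refine ⟨hmain, fun h => ?_⟩
  have hf0pos : 0 < f0 := lt_of_lt_of_le (by positivity) hf0ge
  have hx : 0 < f0 * ((N : ℝ) + 2) / 2 := by positivity
  have hexp : exp (2 * t * M) < f0 * ((N : ℝ) + 2) / 2 := by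
    calc exp (2 * t * M) < exp (Real.log (f0 * ((N : ℝ) + 2) / 2)) := Real.exp_lt_exp.mpr h
      _ = f0 * ((N : ℝ) + 2) / 2 := Real.exp_log hx
  have hE : exp (-2 * t * M) = (exp (2 * t * M))⁻¹ := by
    rw [← Real.exp_neg]; ring_nf
  have hEpos : 0 < exp (2 * t * M) := Real.exp_pos _
  have : 2 / ((N : ℝ) + 2) < exp (-2 * t * M) * f0 := by
    rw [hE, div_lt_iff₀ hNpos]
    rw [inv_mul_eq_div, div_mul_eq_mul_div, lt_div_iff₀ hEpos]
    nlinarith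
  linarith
end
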